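/- Let μ_F be the Haar probability measure on X_F. For z = (m,n) ∈ ℤ² with m,n ≥ 0 and (m,n) ≠ (0,0), ∫_{X_F} conj(w(0))·w(z) dμ_F(w) = 0. -/

import Mathlib

open MeasureTheory

noncomputable instance : MeasurableSpace Circle := borel Circle

def XF : Set ((ℤ × ℤ) → Circle) :=
  {w | ∀ z : ℤ × ℤ, w (z + (1, 0)) = w z ^ 2 ∧ w (z + (0, 1)) = w z ^ 3}

instance : BorelSpace Circle := ⟨rfl⟩

lemma circle_exp_pow (x : ℝ) (k : ℕ) : Circle.exp x ^ k = Circle.exp (k * x) := by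
  induction k with
  | zero => simp
  | succ k ih =>
    rw [pow_succ, ih, ← Circle.exp_add]
    push_cast
    ring_nf

/-- For the Haar probability measure on `X_F` and `z = (m,n)` with
`m, n ≥ 0` and `(m,n) ≠ (0,0)`, the autocorrelation integral
`∫ conj(w(0))·w(z) dμ_F` vanishes. -/
theorem xf_autocorrelation_vanishes_first_quadrant
    (μF : Measure ((ℤ × ℤ) → Circle)) [IsProbabilityMeasure μF]
    (hsupp : μF XF = 1)
    (hinv : ∀ v ∈ XF, Measure.map (fun w => v * w) μF = μF)
    (m n : ℕ) (hmn : (m, n) ≠ (0, 0)) :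
    ∫ w, (starRingEnd ℂ) (w (0, 0) : ℂ) * ((w ((m : ℤ), (n : ℤ)) : ℂ)) ∂μF = 0 := by
  -- K = 2^m * 3^n ≥ 2
  set K : ℝ := (2 : ℝ) ^ (m : ℤ) * (3 : ℝ) ^ (n : ℤ) with hK
  have hK2 : (2 : ℝ) ≤ K := by
    rw [hK]
    rcases Nat.eq_zero_or_pos m with hm | hm
    · have hn : 1 ≤ n := by
        rcases Nat.eq_zero_or_pos n with h0 | h0
        · exact absurd (by simp [hm, h0]) hmn
        · exact h0
      have h3 : (3 : ℝ) ≤ (3 : ℝ) ^ (n : ℤ) := by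
        calc (3:ℝ) = 3 ^ (1:ℤ) := by norm_num
        _ ≤ 3 ^ (n:ℤ) := by
            apply zpow_le_zpow_right₀ (by norm_num)
            exact_mod_cast hn
      have h2 : (1 : ℝ) ≤ (2 : ℝ) ^ (m : ℤ) := one_le_zpow₀ (by norm_num) (by positivity)
      nlinarith
    · have h2 : (2 : ℝ) ≤ (2 : ℝ) ^ (m : ℤ) := by
        calc (2:ℝ) = 2 ^ (1:ℤ) := by norm_num
        _ ≤ 2 ^ (m:ℤ) := by
            apply zpow_le_zpow_right₀ (by norm_num)
            exact_mod_cast hm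
      have h3 : (1 : ℝ) ≤ (3 : ℝ) ^ (n : ℤ) := one_le_zpow₀ (by norm_num) (by positivity)
      nlinarith
  have hD : K - 1 ≠ 0 := by linarith
  set θ : ℝ := Real.pi / (K - 1) with hθ
  -- the twisting element v
  set v : (ℤ × ℤ) → Circle := fun z => Circle.exp (θ * ((2 : ℝ) ^ z.1 * (3 : ℝ) ^ z.2))
    with hv
  have hvXF : v ∈ XF := by
    intro z
    constructor
    · simp only [hv]
      rw [circle_exp_pow]
      congr 1
      simp only [Prod.fst_add, Prod.snd_add]
      rw [zpow_add₀ (by norm_num : (2:ℝ) ≠ 0), zpow_add₀ (by norm_num : (3:ℝ) ≠ 0)]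
      push_cast
      ring
    · simp only [hv]
      rw [circle_exp_pow]
      congr 1
      simp only [Prod.fst_add, Prod.snd_add]
      rw [zpow_add₀ (by norm_num : (2:ℝ) ≠ 0), zpow_add₀ (by norm_num : (3:ℝ) ≠ 0)]
      push_cast
      ring
  -- the integrand
  set f : ((ℤ × ℤ) → Circle) → ℂ :=
    fun w => (starRingEnd ℂ) (w (0, 0) : ℂ) * ((w ((m : ℤ), (n : ℤ)) : ℂ)) with hf
  have hcoe : Continuous (fun u : Circle => (u : ℂ)) := continuous_subtype_val
  have hmeasf : Measurable f := by
    apply Measurable.mul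
    · exact (Complex.continuous_conj.comp hcoe).measurable.comp (measurable_pi_apply _)
    · exact hcoe.measurable.comp (measurable_pi_apply _)
  have hT : Measurable (fun w : (ℤ × ℤ) → Circle => v * w) := by
    apply measurable_pi_lambda
    intro z
    have : Measurable fun w : (ℤ × ℤ) → Circle => w z := measurable_pi_apply z
    exact this.const_mul (v z)
  -- the multiplier c
  set c : ℂ := (starRingEnd ℂ) (v (0, 0) : ℂ) * ((v ((m : ℤ), (n : ℤ)) : ℂ)) with hc
  have hceq : c = -1 := by
    have h0 : (v (0, 0) : ℂ) = Complex.exp (θ * Complex.I) := by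
      simp [hv, Circle.coe_exp]
    have h1 : (v ((m : ℤ), (n : ℤ)) : ℂ) = Complex.exp ((θ * K : ℝ) * Complex.I) := by
      simp only [hv, Circle.coe_exp, hK]
    rw [hc, h0, h1, ← Complex.exp_conj]
    rw [← Complex.exp_add]
    have : (starRingEnd ℂ) (↑θ * Complex.I) + (θ * K : ℝ) * Complex.I
        = ((θ * (K - 1) : ℝ)) * Complex.I := by
      simp [Complex.conj_I, Complex.conj_ofReal]
      push_cast
      ring_nf
    rw [this]
    have hπ : θ * (K - 1) = Real.pi := by
      rw [hθ]
      exact div_mul_cancel₀ _ hD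
    rw [hπ, Complex.exp_pi_mul_I]
  -- invariance gives I = c • I
  have key : ∫ w, f w ∂μF = c * ∫ w, f w ∂μF := by
    conv_lhs => rw [← hinv v hvXF]
    rw [integral_map hT.aemeasurable hmeasf.aestronglyMeasurable]
    have : ∀ w : (ℤ × ℤ) → Circle, f (v * w) = c * f w := by
      intro w
      simp only [hf, hc, Pi.mul_apply, Circle.coe_mul, map_mul]
      ring
    simp_rw [this]
    exact integral_const_mul c f
  have : (2 : ℂ) * ∫ w, f w ∂μF = 0 := by
    rw [hceq] at key
    linear_combination key
  have h2 : (2 : ℂ) ≠ 0 := by norm_num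
  exact (mul_eq_zero.mp this).resolve_left h2
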